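/- Every analytic functionally Hausdorff space X has cardinality that is either at most countable or exactly 𝔠 (the cardinality of the continuum). -/

import Mathlib

open Cardinal Set Topology

universe u

def FunctionallyHausdorff (X : Type u) [TopologicalSpace X] : Prop :=
  ∀ x y : X, x ≠ y → ∃ f : X → unitInterval, Continuous f ∧ f x = 0 ∧ f y = 1

def IsCechComplete (X : Type u) [TopologicalSpace X] : Prop :=
  ∃ (K : Type u) (_ : TopologicalSpace K) (e : X → K),
    CompactSpace K ∧ T2Space K ∧ IsEmbedding e ∧ DenseRange e ∧ IsGδ (Set.range e)

noncomputable def lindelofNumber (X : Type u) [TopologicalSpace X] : Cardinal.{u} :=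
  sInf {κ : Cardinal.{u} | ℵ₀ ≤ κ ∧ ∀ U : Set (Set X), (∀ u ∈ U, IsOpen u) → ⋃₀ U = Set.univ →
    ∃ V ⊆ U, #↥V ≤ κ ∧ ⋃₀ V = Set.univ}

noncomputable def pseudocharacter (X : Type u) [TopologicalSpace X] : Cardinal.{u} :=
  sInf {κ : Cardinal.{u} | ℵ₀ ≤ κ ∧ ∀ x : X, ∃ 𝒰 : Set (Set X),
    #↥𝒰 ≤ κ ∧ (∀ U ∈ 𝒰, IsOpen U ∧ x ∈ U) ∧ ⋂₀ 𝒰 = ⋂₀ {U : Set X | IsOpen U ∧ x ∈ U}}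

def IsScatteredSet {X : Type u} [TopologicalSpace X] (S : Set X) : Prop :=
  ∀ T ⊆ S, T.Nonempty → ∃ x ∈ T, ∃ U : Set X, IsOpen U ∧ U ∩ T = {x}

def IsKAnalytic (X : Type u) [TopologicalSpace X] : Prop :=
  ∃ (P : Type u) (_ : TopologicalSpace P) (f : P → X),
    LindelofSpace P ∧ IsCechComplete P ∧ Continuous f ∧ Function.Surjective f

def IsAnalyticSpace (X : Type u) [TopologicalSpace X] : Prop :=
  ∃ (P : Type u) (_ : TopologicalSpace P), PolishSpace P ∧
    ∃ f : P → X, Continuous f ∧ Function.Surjective f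

noncomputable def boundingNumber : Cardinal.{0} :=
  sInf {κ : Cardinal.{0} | ∃ B : Set (ℕ → ℕ), #↥B = κ ∧
    ∀ y : ℕ → ℕ, ∃ x ∈ B, {n : ℕ | ¬ x n ≤ y n}.Infinite}

section MyAux

open Metric CantorScheme Function

theorem my_aux {P : Type*} [TopologicalSpace P] [PolishSpace P] {Y : Type*}
    [TopologicalSpace Y] [PolishSpace Y] (F : P → Y) (hF : Continuous F)
    (hunc : ¬(Set.range F).Countable) :
    ∃ f : (ℕ → Bool) → Y, Set.range f ⊆ Set.range F ∧ Function.Injective f := by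
  letI := TopologicalSpace.upgradeIsCompletelyMetrizable P
  letI := TopologicalSpace.upgradeIsCompletelyMetrizable Y
  set K : Set P := {p | ∀ U : Set P, p ∈ U → IsOpen U → ¬(F '' U).Countable} with hKdef
  set ι := {U : Set P // IsOpen U ∧ (F '' U).Countable} with hι
  have hcov : Kᶜ ⊆ ⋃ i : ι, (i : Set P) := by
    intro p hp
    simp only [hKdef, mem_compl_iff, mem_setOf_eq, not_forall] at hp
    obtain ⟨U, hpU, hU, hcU⟩ := hp
    exact mem_iUnion.2 ⟨⟨U, hU, not_not.mp hcU⟩, hpU⟩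
  have hKc : (F '' Kᶜ).Countable := by
    obtain ⟨t, htc, hsub⟩ := (HereditarilyLindelof_LindelofSets Kᶜ).elim_countable_subcover
      (fun i : ι => (i : Set P)) (fun i => i.2.1) hcov
    have h1 : F '' Kᶜ ⊆ ⋃ i ∈ t, F '' (i : Set P) := by
      refine subset_trans (image_mono (f := F) hsub) ?_
      rw [image_iUnion₂]
    exact Countable.mono h1 (htc.biUnion fun i _ => i.2.2)
  have hkey : ∀ p ∈ K, ∀ U : Set P, IsOpen U → p ∈ U → ¬(F '' (U ∩ K)).Countable := by
    intro p hp U hU hpU hcount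
    refine hp U hpU hU (Countable.mono ?_ (hcount.union hKc))
    rintro y ⟨x, hx, rfl⟩
    by_cases hxK : x ∈ K
    · exact Or.inl ⟨x, ⟨hx, hxK⟩, rfl⟩
    · exact Or.inr ⟨x, hxK, rfl⟩
  have hKne : K.Nonempty := by
    rcases eq_empty_or_nonempty K with h | h
    · exfalso
      apply hunc
      have : range F = F '' Kᶜ := by rw [h, compl_empty, image_univ]
      rw [this]; exact hKc
    · exact h
  -- the splitting step
  have hstep : ∀ p ∈ K, ∀ ε : ℝ, 0 < ε → ∃ (q : Bool → P) (s : Bool → ℝ),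
      (∀ b, q b ∈ K) ∧ (∀ b, 0 < s b) ∧ (∀ b, s b ≤ ε / 2) ∧
      (∀ b, closedBall (q b) (s b) ⊆ ball p ε) ∧
      Disjoint (F '' closedBall (q false) (s false)) (F '' closedBall (q true) (s true)) := by
    intro p hp ε hε
    have hbig := hkey p hp (ball p ε) isOpen_ball (mem_ball_self hε)
    have : ¬(F '' (ball p ε ∩ K)).Subsingleton := fun h => hbig h.countable
    rw [not_subsingleton_iff] at this
    obtain ⟨y₀, hy₀, y₁, hy₁, hyne⟩ := this
    obtain ⟨p₀, hp₀, rfl⟩ := hy₀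
    obtain ⟨p₁, hp₁, rfl⟩ := hy₁
    obtain ⟨V₀, V₁, hV₀, hV₁, hFV₀, hFV₁, hVd⟩ := t2_separation hyne
    have hq : ∀ (pb : P), pb ∈ ball p ε ∩ K → ∀ V : Set Y, IsOpen V → F pb ∈ V →
        ∃ r : ℝ, 0 < r ∧ r ≤ ε / 2 ∧ closedBall pb r ⊆ ball p ε ∧ F '' closedBall pb r ⊆ V := by
      intro pb hpb V hV hFV
      have hopen : IsOpen (ball p ε ∩ F ⁻¹' V) := isOpen_ball.inter (hV.preimage hF)
      obtain ⟨r, hr, hrsub⟩ := Metric.isOpen_iff.mp hopen pb ⟨hpb.1, hFV⟩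
      refine ⟨min (r / 2) (ε / 2), by positivity, min_le_right _ _, ?_, ?_⟩
      · intro z hz
        have : z ∈ ball pb r := lt_of_le_of_lt (mem_closedBall.mp hz)
          (lt_of_le_of_lt (min_le_left _ _) (by linarith))
        exact (hrsub this).1
      · rintro y ⟨z, hz, rfl⟩
        have : z ∈ ball pb r := lt_of_le_of_lt (mem_closedBall.mp hz)
          (lt_of_le_of_lt (min_le_left _ _) (by linarith))
        exact (hrsub this).2
    obtain ⟨r₀, hr₀, hr₀le, hr₀sub, hr₀V⟩ := hq p₀ hp₀ V₀ hV₀ hFV₀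
    obtain ⟨r₁, hr₁, hr₁le, hr₁sub, hr₁V⟩ := hq p₁ hp₁ V₁ hV₁ hFV₁
    exact ⟨fun b => if b then p₁ else p₀, fun b => if b then r₁ else r₀,
      fun b => by cases b <;> [exact hp₀.2; exact hp₁.2],
      fun b => by cases b <;> [exact hr₀; exact hr₁],
      fun b => by cases b <;> [exact hr₀le; exact hr₁le],
      fun b => by cases b <;> [exact hr₀sub; exact hr₁sub],
      hVd.mono hr₀V hr₁V⟩
  choose! q s hqK hspos hsle hsub hdisj using hstep
  obtain ⟨pinit, hpinit⟩ := hKne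
  let G : List Bool → {x : P × ℝ // x.1 ∈ K ∧ 0 < x.2} :=
    List.rec ⟨(pinit, 1), hpinit, one_pos⟩
      (fun b _ ih => ⟨(q ih.1.1 ih.1.2 b, s ih.1.1 ih.1.2 b),
        hqK ih.1.1 ih.2.1 ih.1.2 ih.2.2 b, hspos ih.1.1 ih.2.1 ih.1.2 ih.2.2 b⟩)
  have hGcons : ∀ (b : Bool) (l : List Bool), G (b :: l) =
      ⟨(q (G l).1.1 (G l).1.2 b, s (G l).1.1 (G l).1.2 b),
        hqK _ (G l).2.1 _ (G l).2.2 b, hspos _ (G l).2.1 _ (G l).2.2 b⟩ := fun _ _ => rfl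
  set D : List Bool → Set P := fun l => closedBall (G l).1.1 (G l).1.2 ∩ K with hD
  have hne : ∀ l, (D l).Nonempty :=
    fun l => ⟨(G l).1.1, mem_closedBall_self (G l).2.2.le, (G l).2.1⟩
  have hclosed : ∀ l, IsClosed (D l) := by
    intro l
    apply IsClosed.inter isClosed_closedBall
    rw [← isOpen_compl_iff]
    have : Kᶜ = ⋃ i : ι, (i : Set P) := by
      apply Subset.antisymm hcov
      rintro p hp hpK
      obtain ⟨i, hi⟩ := mem_iUnion.mp hp
      exact hpK i.1 hi i.2.1 i.2.2
    rw [this]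
    exact isOpen_iUnion fun i => i.2.1
  have hanti : CantorScheme.Antitone D := by
    intro l b
    rw [hD]
    apply inter_subset_inter_left
    intro z hz
    have h1 := hsub (G l).1.1 (G l).2.1 (G l).1.2 (G l).2.2 b
    exact ball_subset_closedBall (h1 hz)
  have hrad : ∀ l : List Bool, (G l).1.2 ≤ (1/2) ^ l.length := by
    intro l
    induction l with
    | nil => simp; exact le_rfl
    | cons b l ih =>
      have h1 := hsle (G l).1.1 (G l).2.1 (G l).1.2 (G l).2.2 b
      rw [hGcons]
      simp only [List.length_cons, pow_succ]
      calc s (G l).1.1 (G l).1.2 b ≤ (G l).1.2 / 2 := h1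
        _ ≤ (1/2) ^ l.length / 2 := by linarith [ih]
        _ = (1/2) ^ l.length * (1/2) := by ring
  have hdiam : VanishingDiam D := by
    intro x
    refine tendsto_of_tendsto_of_tendsto_of_le_of_le' (g := fun _ : ℕ => (0 : ENNReal))
      (h := fun n : ℕ => ENNReal.ofReal (2 * (1/2) ^ n)) tendsto_const_nhds ?_ ?_ ?_
    · have h2 : Filter.Tendsto (fun n : ℕ => 2 * (1/2 : ℝ) ^ n) Filter.atTop (nhds (2 * 0)) :=
        (tendsto_pow_atTop_nhds_zero_of_lt_one (by norm_num) (by norm_num)).const_mul 2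
      rw [mul_zero] at h2
      have := (ENNReal.continuous_ofReal.tendsto 0).comp h2
      simpa only [ENNReal.ofReal_zero, Function.comp_def] using this
    · filter_upwards with n; exact zero_le
    · filter_upwards with n
      apply EMetric.diam_le
      intro a ha b hb
      rw [edist_dist]
      apply ENNReal.ofReal_le_ofReal
      have ha' := mem_closedBall.mp ha.1
      have hb' := mem_closedBall.mp hb.1
      have hrr : (G (PiNat.res x n)).1.2 ≤ (1/2)^n := by
        have := hrad (PiNat.res x n); rwa [PiNat.res_length] at this
      calc dist a b ≤ dist a (G (PiNat.res x n)).1.1 + dist (G (PiNat.res x n)).1.1 b :=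
            dist_triangle _ _ _
        _ ≤ (G (PiNat.res x n)).1.2 + (G (PiNat.res x n)).1.2 := by
            rw [dist_comm (G (PiNat.res x n)).1.1 b]; exact add_le_add ha' hb'
        _ ≤ 2 * (1/2)^n := by linarith
  have hDdisj : ∀ l, Disjoint (F '' D (false :: l)) (F '' D (true :: l)) := by
    intro l
    have h1 := hdisj (G l).1.1 (G l).2.1 (G l).1.2 (G l).2.2
    exact h1.mono (image_mono (f := F) inter_subset_left) (image_mono (f := F) inter_subset_left)
  have hclant : ClosureAntitone D := hanti.closureAntitone hclosed
  have hdomeq : (inducedMap D).1 = Set.univ := hclant.map_of_vanishingDiam hdiam hne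
  have hdom : ∀ x : ℕ → Bool, x ∈ (inducedMap D).1 := fun x => hdomeq ▸ mem_univ x
  refine ⟨fun x => F ((inducedMap D).2 ⟨x, hdom x⟩), ?_, ?_⟩
  · rintro y ⟨x, rfl⟩; exact ⟨_, rfl⟩
  · intro x y hxy
    simp only at hxy
    have hres : ∀ n, PiNat.res x n = PiNat.res y n := by
      intro n
      induction n with
      | zero => simp
      | succ n ih =>
        rw [PiNat.res_succ, PiNat.res_succ, ih]
        have hx1 : (inducedMap D).2 ⟨x, hdom x⟩ ∈ D (x n :: PiNat.res x n) := by
          have := map_mem ⟨x, hdom x⟩ (n+1); rwa [PiNat.res_succ] at this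
        have hy1 : (inducedMap D).2 ⟨y, hdom y⟩ ∈ D (y n :: PiNat.res y n) := by
          have := map_mem ⟨y, hdom y⟩ (n+1); rwa [PiNat.res_succ] at this
        rw [ih] at hx1
        congr 1
        by_contra hne'
        have hxmem : F ((inducedMap D).2 ⟨x, hdom x⟩) ∈ F '' D (x n :: PiNat.res y n) :=
          ⟨_, hx1, rfl⟩
        have hymem : F ((inducedMap D).2 ⟨x, hdom x⟩) ∈ F '' D (y n :: PiNat.res y n) := by
          rw [hxy]; exact ⟨_, hy1, rfl⟩
        cases hbx : x n <;> cases hby : y n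
        · exact hne' (by rw [hbx, hby])
        · rw [hbx] at hxmem; rw [hby] at hymem
          exact (hDdisj (PiNat.res y n)).ne_of_mem hxmem hymem rfl
        · rw [hbx] at hxmem; rw [hby] at hymem
          exact (hDdisj (PiNat.res y n)).ne_of_mem hymem hxmem rfl
        · exact hne' (by rw [hbx, hby])
    funext n
    have := hres (n+1)
    rw [PiNat.res_succ, PiNat.res_succ] at this
    exact (List.cons.injEq _ _ _ _ ▸ this).1

end MyAux

theorem stmt6 {X : Type u} [TopologicalSpace X]
    (hX : FunctionallyHausdorff X) (hA : IsAnalyticSpace X) :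
    #X ≤ ℵ₀ ∨ #X = Cardinal.continuum := by
  by_cases hc : #X ≤ ℵ₀
  · exact Or.inl hc
  right
  obtain ⟨P, _, hP, g, hg, hgs⟩ := hA
  haveI := hP
  set ι := {xy : X × X // xy.1 ≠ xy.2} with hιdef
  have hsep : ∀ i : ι, ∃ f : X → unitInterval, Continuous f ∧ f i.1.1 = 0 ∧ f i.1.2 = 1 :=
    fun i => hX i.1.1 i.1.2 i.2
  choose f hfc hf0 hf1 using hsep
  set U : ι → Set (P × P) := fun i =>
    {pq | (f i (g pq.1) : ℝ) < 1/2 ∧ (1/2 : ℝ) < (f i (g pq.2) : ℝ)} with hUdef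
  have hUopen : ∀ i, IsOpen (U i) := by
    intro i
    have c1 : Continuous fun pq : P × P => (f i (g pq.1) : ℝ) :=
      continuous_subtype_val.comp ((hfc i).comp (hg.comp continuous_fst))
    have c2 : Continuous fun pq : P × P => (f i (g pq.2) : ℝ) :=
      continuous_subtype_val.comp ((hfc i).comp (hg.comp continuous_snd))
    exact (isOpen_lt c1 continuous_const).inter (isOpen_lt continuous_const c2)
  have hcov : {pq : P × P | g pq.1 ≠ g pq.2} ⊆ ⋃ i, U i := by
    intro pq hpq
    refine Set.mem_iUnion.2 ⟨⟨(g pq.1, g pq.2), hpq⟩, ?_, ?_⟩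
    · show ((f ⟨(g pq.1, g pq.2), hpq⟩ (g pq.1) : ℝ)) < 1/2
      rw [hf0 ⟨(g pq.1, g pq.2), hpq⟩]
      norm_num
    · show (1/2 : ℝ) < ((f ⟨(g pq.1, g pq.2), hpq⟩ (g pq.2) : ℝ))
      rw [hf1 ⟨(g pq.1, g pq.2), hpq⟩]
      norm_num
  obtain ⟨t, htc, hsubc⟩ :=
    (HereditarilyLindelof_LindelofSets {pq : P × P | g pq.1 ≠ g pq.2}).elim_countable_subcover
      U hUopen hcov
  have hsept : ∀ x y : X, x ≠ y → ∃ i ∈ t, (f i x : ℝ) < 1/2 ∧ (1/2 : ℝ) < (f i y : ℝ) := by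
    intro x y hxy
    obtain ⟨p, rfl⟩ := hgs x
    obtain ⟨q, rfl⟩ := hgs y
    have hmem : (p, q) ∈ ⋃ i ∈ t, U i := hsubc hxy
    rw [Set.mem_iUnion₂] at hmem
    obtain ⟨i, hit, hiU⟩ := hmem
    exact ⟨i, hit, hiU.1, hiU.2⟩
  rcases t.eq_empty_or_nonempty with rfl | htne
  · exfalso
    apply hc
    have hsub : Subsingleton X := by
      constructor
      intro a b
      by_contra hab
      obtain ⟨i, hi, -⟩ := hsept a b hab
      exact (Set.notMem_empty i) hi
    exact Cardinal.mk_le_aleph0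
  obtain ⟨e, he⟩ := htc.exists_eq_range htne
  set H : X → (ℕ → ℝ) := fun x n => (f (e n) x : ℝ) with hHdef
  have Hinj : Function.Injective H := by
    intro x y hHxy
    by_contra hxy
    obtain ⟨i, hit, h1, h2⟩ := hsept x y hxy
    rw [he] at hit
    obtain ⟨n, rfl⟩ := hit
    have := congrFun hHxy n
    simp only [hHdef] at this
    rw [this] at h1
    linarith
  have Hgc : Continuous (H ∘ g) := by
    apply continuous_pi
    intro n
    exact continuous_subtype_val.comp ((hfc (e n)).comp hg)
  have hSunc : ¬(Set.range (H ∘ g)).Countable := by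
    intro hcnt
    apply hc
    have inj2 : Function.Injective
        (fun x : X => (⟨H x, by obtain ⟨p, rfl⟩ := hgs x; exact ⟨p, rfl⟩⟩ :
          Set.range (H ∘ g))) := by
      intro a b hab
      exact Hinj (congrArg Subtype.val hab)
    have h1 : Cardinal.lift.{0} #X ≤ Cardinal.lift.{u} #(Set.range (H ∘ g)) :=
      Cardinal.lift_mk_le'.mpr ⟨⟨_, inj2⟩⟩
    have h2 : #(Set.range (H ∘ g)) ≤ ℵ₀ := Cardinal.mk_le_aleph0_iff.mpr hcnt.to_subtype
    rw [Cardinal.lift_uzero] at h1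
    calc #X ≤ Cardinal.lift.{u} #(Set.range (H ∘ g)) := h1
      _ ≤ Cardinal.lift.{u} ℵ₀ := Cardinal.lift_le.mpr h2
      _ = ℵ₀ := Cardinal.lift_aleph0
  obtain ⟨f', hfr, hfi⟩ := my_aux (H ∘ g) Hgc hSunc
  have hφex : ∀ a : ℕ → Bool, ∃ x : X, H x = f' a := by
    intro a
    obtain ⟨p, hp⟩ := hfr (Set.mem_range_self a)
    exact ⟨g p, hp⟩
  choose φ hφ using hφex
  have φinj : Function.Injective φ := by
    intro a b hab
    apply hfi
    rw [← hφ a, ← hφ b, hab]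
  have hlow : Cardinal.continuum ≤ #X := by
    have h1 : Cardinal.lift.{u} #(ℕ → Bool) ≤ Cardinal.lift.{0} #X :=
      Cardinal.lift_mk_le'.mpr ⟨⟨φ, φinj⟩⟩
    have hb : #(ℕ → Bool) = Cardinal.continuum := by
      rw [← Cardinal.power_def, Cardinal.mk_bool, Cardinal.mk_nat, Cardinal.two_power_aleph0]
    rw [hb, Cardinal.lift_uzero, Cardinal.lift_continuum] at h1
    exact h1
  have hhigh : #X ≤ Cardinal.continuum := by
    have h1 : Cardinal.lift.{0} #X ≤ Cardinal.lift.{u} #(ℕ → ℝ) :=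
      Cardinal.lift_mk_le'.mpr ⟨⟨H, Hinj⟩⟩
    have hb : #(ℕ → ℝ) = Cardinal.continuum := by
      rw [← Cardinal.power_def, Cardinal.mk_real, Cardinal.mk_nat,
        Cardinal.continuum_power_aleph0]
    rw [hb, Cardinal.lift_uzero, Cardinal.lift_continuum] at h1
    exact h1
  exact le_antisymm hhigh hlow
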